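/- The word xyzxy (in three distinct variables x, y, z) is an isoterm for the 6-element Brandt monoid B_2^1: if an identity xyzxy ≈ v (where v is a word over {x, y, z}) holds under all substitutions of elements of B_2^1, then v = xyzxy. -/

import Mathlib

/-- The 6-element Brandt monoid `B₂¹` realized as a set of `2×2` matrices over `ℚ`. -/
def B21 : Set (Matrix (Fin 2) (Fin 2) ℚ) :=
  {0, Matrix.single 0 0 1, Matrix.single 0 1 1,
   Matrix.single 1 0 1, Matrix.single 1 1 1, 1}

namespace XyzxyAux

abbrev M2 := Matrix (Fin 2) (Fin 2) ℚ

def e (i j : Fin 2) : M2 := Matrix.single i j 1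

lemma e_mul (i j k l : Fin 2) : e i j * e k l = if j = k then e i l else 0 := by
  split
  · subst ‹j = k›; simp only [e]; rw [Matrix.single_mul_single_same, one_mul]
  · exact Matrix.single_mul_single_of_ne (c := 1) (i := i) (j := j) (k := k) (h := ‹j ≠ k›) (d := 1)

lemma e_mem (i j : Fin 2) : e i j ∈ B21 := by
  fin_cases i <;> fin_cases j <;> simp [B21, e]

lemma one_mem : (1 : M2) ∈ B21 := by simp [B21]

def φc : Fin 3 → M2 := ![1, 1, e 0 1]
def φ1 : Fin 3 → M2 := ![e 0 0, e 0 1, e 1 0]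
def φa : Fin 3 → M2 := ![e 0 1, e 1 0, 1]

lemma φc_mem : ∀ i, φc i ∈ B21 := by
  intro i; fin_cases i <;> simp [φc] <;> first | exact one_mem | exact e_mem _ _
lemma φ1_mem : ∀ i, φ1 i ∈ B21 := by
  intro i; fin_cases i <;> simp [φ1] <;> first | exact one_mem | exact e_mem _ _
lemma φa_mem : ∀ i, φa i ∈ B21 := by
  intro i; fin_cases i <;> simp [φa] <;> first | exact one_mem | exact e_mem _ _

lemma e01_pow (n : ℕ) : e 0 1 ^ (n + 2) = 0 := by
  have : e 0 1 ^ (n + 2) = e 0 1 ^ n * (e 0 1 * e 0 1) := by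
    rw [pow_succ, pow_succ, mul_assoc]
  rw [this]; simp [e_mul]

lemma prod_φc (w : List (Fin 3)) : (w.map φc).prod = e 0 1 ^ (w.count 2) := by
  induction w with
  | nil => simp
  | cons a t ih =>
    rw [List.map_cons, List.prod_cons, ih, List.count_cons]
    fin_cases a <;> simp [φc, pow_succ']

lemma split_of_count_one :
    ∀ w : List (Fin 3), w.count 2 = 1 →
      ∃ p q, w = p ++ 2 :: q ∧ (2 : Fin 3) ∉ p ∧ (2 : Fin 3) ∉ q := by
  intro w
  induction w with
  | nil => intro h; simp at h
  | cons a t ih =>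
    intro h
    by_cases ha : a = 2
    · subst ha
      have ht : t.count 2 = 0 := by simpa [List.count_cons] using h
      exact ⟨[], t, rfl, by simp, by simpa using List.count_eq_zero.mp ht⟩
    · have ht : t.count 2 = 1 := by simpa [List.count_cons, ha] using h
      obtain ⟨p, q, rfl, hp, hq⟩ := ih ht
      exact ⟨a :: p, q, rfl, by simp [hp]; exact fun h => ha h.symm, hq⟩

lemma char1 :
    ∀ u : List (Fin 3), (2 : Fin 3) ∉ u →
      (u = [] ∧ (u.map φ1).prod = 1) ∨
      ((∃ k, u = List.replicate (k + 1) 0) ∧ (u.map φ1).prod = e 0 0) ∨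
      ((∃ k, u = List.replicate k 0 ++ [1]) ∧ (u.map φ1).prod = e 0 1) ∨
      (u.map φ1).prod = 0 := by
  intro u
  induction u with
  | nil => intro _; left; simp
  | cons a t ih =>
    intro h
    have h2 : (2 : Fin 3) ∉ t := fun ht => h (List.mem_cons_of_mem _ ht)
    have ha : a ≠ 2 := fun hh => h (by simp [hh])
    rcases ih h2 with ⟨rfl, hP⟩ | ⟨⟨k, rfl⟩, hP⟩ | ⟨⟨k, rfl⟩, hP⟩ | hP <;>
      fin_cases a <;> try exact absurd rfl ha
    · right; left
      exact ⟨⟨0, rfl⟩, by simp [φ1, e_mul]⟩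
    · right; right; left
      exact ⟨⟨0, rfl⟩, by simp [φ1, e_mul]⟩
    · right; left
      refine ⟨⟨k + 1, by simp [List.replicate_succ]⟩, ?_⟩
      rw [List.map_cons, List.prod_cons, hP]; simp [φ1, e_mul]
    · right; right; right
      rw [List.map_cons, List.prod_cons, hP]; simp [φ1, e_mul]
    · right; right; left
      refine ⟨⟨k + 1, by simp [List.replicate_succ]⟩, ?_⟩
      rw [List.map_cons, List.prod_cons, hP]; simp [φ1, e_mul]
    · right; right; right
      rw [List.map_cons, List.prod_cons, hP]; simp [φ1, e_mul]
    · right; right; right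
      rw [List.map_cons, List.prod_cons, hP]; simp [φ1, e_mul]
    · right; right; right
      rw [List.map_cons, List.prod_cons, hP]; simp [φ1, e_mul]

end XyzxyAux

open XyzxyAux in
/-- The word `xyzxy` (with `x := 0`, `y := 1`, `z := 2`) is an isoterm for the Brandt
monoid `B₂¹`: any word `v` over `{x, y, z}` such that `xyzxy ≈ v` holds under every
substitution of elements of `B₂¹` must equal `xyzxy`. -/
theorem xyzxy_isoterm_for_B21 :
    ∀ v : List (Fin 3),
      (∀ φ : Fin 3 → Matrix (Fin 2) (Fin 2) ℚ, (∀ i, φ i ∈ B21) →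
        (([0, 1, 2, 0, 1] : List (Fin 3)).map φ).prod = (v.map φ).prod) →
      v = [0, 1, 2, 0, 1] := by
  intro v H
  -- Step 1: the letter 2 occurs exactly once in v.
  have Hc := H φc φc_mem
  have hLc : (([0, 1, 2, 0, 1] : List (Fin 3)).map φc).prod = e 0 1 := by
    simp [φc]
  rw [hLc, prod_φc] at Hc
  have hcnt : List.count 2 v = 1 := by
    rcases hn : List.count 2 v with _ | n
    · rw [hn, pow_zero] at Hc; exact absurd Hc (by decide)
    · rcases n with _ | m
      · rfl
      · rw [hn, e01_pow] at Hc; exact absurd Hc (by decide)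
  obtain ⟨p, q, rfl, hp2, hq2⟩ := split_of_count_one v hcnt
  -- Step 2: the substitution φ1 forces p and q to be of the form 0^k ++ [1].
  have H1 := H φ1 φ1_mem
  have hL1 : (([0, 1, 2, 0, 1] : List (Fin 3)).map φ1).prod = e 0 1 := by
    simp [φ1, e_mul]
  have hR1 : ((p ++ 2 :: q).map φ1).prod
      = (p.map φ1).prod * (e 1 0 * (q.map φ1).prod) := by
    simp [List.map_append, List.prod_append, List.prod_cons, φ1]
  rw [hL1, hR1] at H1
  rcases char1 p hp2 with ⟨hpe, hP⟩ | ⟨⟨k1, hpe⟩, hP⟩ | ⟨⟨k1, hpe⟩, hP⟩ | hP <;>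
    rcases char1 q hq2 with ⟨hqe, hQ⟩ | ⟨⟨k2, hqe⟩, hQ⟩ | ⟨⟨k2, hqe⟩, hQ⟩ | hQ <;>
    rw [hP, hQ] at H1 <;>
    first
      | (exfalso; simp [e_mul] at H1; all_goals exact absurd H1 (by decide))
      | (subst hpe; subst hqe
         -- Step 3: the substitution φa forces k1 = k2 = 1.
         have Ha := H φa φa_mem
         have hLa : (([0, 1, 2, 0, 1] : List (Fin 3)).map φa).prod = e 0 0 := by
           simp [φa, e_mul]
         rw [hLa] at Ha
         simp only [List.map_append, List.prod_append, List.map_cons, List.prod_cons,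
           List.map_nil, List.prod_nil, List.map_replicate, List.prod_replicate, φa] at Ha
         rcases k1 with _ | _ | k1 <;> rcases k2 with _ | _ | k2 <;>
           simp [e01_pow, e_mul, pow_zero, pow_one] at Ha <;>
           first
             | (exact absurd Ha (by decide))
             | rfl)
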